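/- Let k ≥ 2 be an integer and λ ∈ ℂ with Re λ ≥ 0, and let a_n(λ,k) be the sequence defined by a_{−1} = 0, a_0 = 1, a_{n+2} = A_n(λ,k)·a_{n+1} + B_n(λ,k)·a_n. Then there exists N such that a_n(λ,k) ≠ 0 for all n ≥ N, and the ratio r_n(λ,k) = a_{n+1}(λ,k)/a_n(λ,k) converges as n → ∞ either to 1 or to −1/k. -/

import Mathlib

/-- Recurrence coefficient `A_n(λ,k)`. -/
noncomputable def Acoef (k : ℕ) (lam : ℂ) (n : ℤ) : ℂ :=
  ((k : ℂ) * lam ^ 2 + (k : ℂ) * (4 * (n : ℂ) + 9) * lam + 4 * (k : ℂ) * (n : ℂ) ^ 2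
      + 16 * (n : ℂ) * (k : ℂ) - 4 * (n : ℂ) ^ 2 + 14 * (k : ℂ) - 16 * (n : ℂ) - 16)
    / (2 * (k : ℂ) * ((n : ℂ) + 2) * (2 * (n : ℂ) + (k : ℂ) + 8))

/-- Recurrence coefficient `B_n(λ,k)`. -/
noncomputable def Bcoef (k : ℕ) (lam : ℂ) (n : ℤ) : ℂ :=
  ((lam + 2 * (n : ℂ) + 3) * (lam + 2 * (n : ℂ) + 2))
    / (2 * (k : ℂ) * ((n : ℂ) + 2) * (2 * (n : ℂ) + (k : ℂ) + 8))

set_option maxHeartbeats 1000000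

open Filter

lemma contract_tendsto_zero (r : ℝ) (hr0 : 0 ≤ r) (hr : r < 1) (q c : ℕ → ℝ)
    (hq0 : ∀ n, 0 ≤ q n) (hqb : ∀ n, q n ≤ 1)
    (hc : Tendsto c atTop (nhds 0))
    (hstep : ∀ n, q (n + 1) ≤ r * q n + c n) :
    Tendsto q atTop (nhds 0) := by
  rw [Metric.tendsto_atTop]
  intro δ hδ
  -- choose N1 with c n ≤ δ/4 * (1 - r) for n ≥ N1
  have h4 : (0:ℝ) < δ / 4 * (1 - r) := by nlinarith
  obtain ⟨N1, hN1⟩ := (Metric.tendsto_atTop.mp hc) (δ / 4 * (1 - r)) h4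
  have hcle : ∀ n ≥ N1, c n ≤ δ / 4 * (1 - r) := by
    intro n hn
    have := hN1 n hn
    rw [Real.dist_eq, sub_zero] at this
    calc c n ≤ |c n| := le_abs_self _
    _ ≤ δ / 4 * (1 - r) := this.le
  -- inductive bound: q (N1 + m) ≤ r^m + δ/4
  have key : ∀ m, q (N1 + m) ≤ r ^ m + δ / 4 := by
    intro m
    induction m with
    | zero => simpa using (hqb (N1 + 0)).trans (by linarith)
    | succ m ih =>
      have h1 : q (N1 + (m + 1)) ≤ r * q (N1 + m) + c (N1 + m) := by
        have h := hstep (N1 + m)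
        rwa [show N1 + m + 1 = N1 + (m + 1) from by omega] at h
      have h2 : c (N1 + m) ≤ δ / 4 * (1 - r) := hcle _ (Nat.le_add_right _ _)
      have h3 : r * q (N1 + m) ≤ r * (r ^ m + δ / 4) := by
        exact mul_le_mul_of_nonneg_left ih hr0
      calc q (N1 + (m + 1)) ≤ r * (r ^ m + δ / 4) + δ / 4 * (1 - r) := by linarith
      _ = r ^ (m + 1) + δ / 4 := by ring
  obtain ⟨m0, hm0⟩ := exists_pow_lt_of_lt_one (show (0:ℝ) < δ/4 by positivity) hr
  refine ⟨N1 + m0, fun n hn => ?_⟩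
  obtain ⟨m, rfl⟩ := Nat.exists_eq_add_of_le hn
  have hb : q (N1 + m0 + m) ≤ r ^ (m0 + m) + δ / 4 := by
    have := key (m0 + m); rwa [← Nat.add_assoc] at this
  have hpow : r ^ (m0 + m) ≤ r ^ m0 := by
    apply pow_le_pow_of_le_one hr0 hr.le (Nat.le_add_right _ _)
  rw [Real.dist_eq, sub_zero, abs_of_nonneg (hq0 _)]
  have := hq0 (N1 + m0 + m)
  linarith

lemma ratio_alg (κ e d X Y : ℝ) (hd : d ≠ 0) (hX : X ≠ 0) :
    (κ * Y + 2 * e * X) / (d * X) = κ / d * (Y / X) + 2 * e / d := by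
  field_simp

lemma perron (κ : ℝ) (hκ0 : 0 < κ) (hκ1 : κ < 1) (t2 : ℂ) (ht2 : ‖t2‖ = κ)
    (x y e : ℕ → ℂ) (ε : ℕ → ℝ) (hεpos : ∀ n, 0 ≤ ε n)
    (hx : ∀ n, x (n + 1) = x n + e n) (hy : ∀ n, y (n + 1) = t2 * y n + e n)
    (he : ∀ n, ‖e n‖ ≤ ε n * (‖x n‖ + ‖y n‖))
    (hε : Tendsto ε atTop (nhds 0))
    (hM : ∀ n, x n ≠ 0 ∨ y n ≠ 0) :
    (Tendsto (fun n => y n / x n) atTop (nhds 0) ∧ ∀ᶠ n in atTop, x n ≠ 0) ∨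
      (Tendsto (fun n => x n / y n) atTop (nhds 0) ∧ ∀ᶠ n in atTop, y n ≠ 0) := by
  obtain ⟨ε₀, hε₀def⟩ : ∃ t : ℝ, t = (1 - κ) / 4 := ⟨_, rfl⟩
  have hε₀pos : 0 < ε₀ := by rw [hε₀def]; linarith
  obtain ⟨N0, hN0⟩ := (Metric.tendsto_atTop.mp hε) ε₀ hε₀pos
  have hεle : ∀ n ≥ N0, ε n ≤ ε₀ := by
    intro n hn
    have := hN0 n hn
    rw [Real.dist_eq, sub_zero] at this
    exact (le_abs_self _).trans this.le
  -- basic norm estimates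
  have hxlb : ∀ n, ‖x n‖ - ‖e n‖ ≤ ‖x (n + 1)‖ := by
    intro n
    have h1 : ‖x n‖ ≤ ‖x (n + 1)‖ + ‖e n‖ := by
      calc ‖x n‖ = ‖(x (n + 1)) - e n‖ := by rw [hx n]; ring_nf
      _ ≤ ‖x (n + 1)‖ + ‖e n‖ := norm_sub_le _ _
    linarith
  have hyub : ∀ n, ‖y (n + 1)‖ ≤ κ * ‖y n‖ + ‖e n‖ := by
    intro n
    calc ‖y (n + 1)‖ = ‖t2 * y n + e n‖ := by rw [hy n]
    _ ≤ ‖t2 * y n‖ + ‖e n‖ := norm_add_le _ _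
    _ = κ * ‖y n‖ + ‖e n‖ := by rw [norm_mul, ht2]
  by_cases hcase : ∃ n, N0 ≤ n ∧ ‖y n‖ ≤ ‖x n‖
  · -- x dominates
    left
    obtain ⟨N, hNge, hNyx⟩ := hcase
    have inv : ∀ m, ‖y (N + m)‖ ≤ ‖x (N + m)‖ ∧ 0 < ‖x (N + m)‖ := by
      intro m
      induction m with
      | zero =>
        refine ⟨by simpa using hNyx, ?_⟩
        rcases hM N with h | h
        · simpa using norm_pos_iff.mpr h
        · have : 0 < ‖y N‖ := norm_pos_iff.mpr h
          simpa using lt_of_lt_of_le this hNyx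
      | succ m ih =>
        obtain ⟨hyx, hxpos⟩ := ih
        set n := N + m with hn
        have hεn : ε n ≤ ε₀ := hεle n (by omega)
        have hen : ‖e n‖ ≤ 2 * ε₀ * ‖x n‖ := by
          have h1 := he n
          have h2 : ε n * (‖x n‖ + ‖y n‖) ≤ ε₀ * (‖x n‖ + ‖x n‖) := by
            have := hεpos n
            nlinarith [norm_nonneg (x n), norm_nonneg (y n)]
          linarith
        have hx1 : (1 - 2 * ε₀) * ‖x n‖ ≤ ‖x (n + 1)‖ := by
          have := hxlb n; linarith
        have hx1pos : 0 < ‖x (n + 1)‖ := by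
          have h12 : 0 < 1 - 2 * ε₀ := by rw [hε₀def]; linarith
          calc (0:ℝ) < (1 - 2 * ε₀) * ‖x n‖ := mul_pos h12 hxpos
          _ ≤ _ := hx1
        have hy1 : ‖y (n + 1)‖ ≤ (1 - 2 * ε₀) * ‖x n‖ := by
          have h1 := hyub n
          have : κ + 2 * ε₀ = 1 - 2 * ε₀ := by rw [hε₀def]; ring
          nlinarith [norm_nonneg (y n)]
        have heq : N + (m + 1) = n + 1 := by omega
        rw [heq]
        exact ⟨hy1.trans hx1, hx1pos⟩
    -- contraction for the ratio of norms
    obtain ⟨r, hrdef⟩ : ∃ t : ℝ, t = κ / (1 - 2 * ε₀) := ⟨_, rfl⟩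
    have h12 : 0 < 1 - 2 * ε₀ := by rw [hε₀def]; linarith
    have hr0 : 0 ≤ r := by rw [hrdef]; positivity
    have hr1 : r < 1 := by
      rw [hrdef, div_lt_one h12, hε₀def]; linarith
    have hq : Tendsto (fun m => ‖y (N + m)‖ / ‖x (N + m)‖) atTop (nhds 0) := by
      apply contract_tendsto_zero r hr0 hr1 _ (fun m => 2 * ε (N + m) / (1 - 2 * ε₀))
      · intro m; positivity
      · intro m
        exact div_le_one_of_le₀ (inv m).1 (norm_nonneg _)
      · have : Tendsto (fun m => ε (N + m)) atTop (nhds 0) := by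
          rw [show (fun m => ε (N + m)) = (fun m => ε (m + N)) from funext fun m => by rw [Nat.add_comm]]
          exact (tendsto_add_atTop_iff_nat N).mpr hε
        have h2 := this.const_mul (2 / (1 - 2 * ε₀))
        simpa [mul_comm, mul_div_assoc, div_eq_mul_inv, mul_assoc] using h2
      · intro m
        set n := N + m with hn
        obtain ⟨hyx, hxpos⟩ := inv m
        have hεn : ε n ≤ ε₀ := hεle n (by omega)
        have hen : ‖e n‖ ≤ 2 * ε n * ‖x n‖ := by
          have h1 := he n
          have := hεpos n
          nlinarith [norm_nonneg (x n), norm_nonneg (y n)]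
        have hx1 : (1 - 2 * ε₀) * ‖x n‖ ≤ ‖x (n + 1)‖ := by
          have h1 := hxlb n
          have : ‖e n‖ ≤ 2 * ε₀ * ‖x n‖ := by nlinarith [norm_nonneg (x n)]
          linarith
        have hy1 : ‖y (n + 1)‖ ≤ κ * ‖y n‖ + 2 * ε n * ‖x n‖ := by
          have := hyub n; linarith
        have hx1pos : 0 < (1 - 2 * ε₀) * ‖x n‖ := by positivity
        have heq : N + (m + 1) = n + 1 := by omega
        rw [heq]
        have hnum0 : 0 ≤ κ * ‖y n‖ + 2 * ε n * ‖x n‖ := by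
          have := hεpos n
          positivity
        calc ‖y (n + 1)‖ / ‖x (n + 1)‖
            ≤ (κ * ‖y n‖ + 2 * ε n * ‖x n‖) / ((1 - 2 * ε₀) * ‖x n‖) :=
              div_le_div₀ hnum0 hy1 hx1pos hx1
        _ = r * (‖y n‖ / ‖x n‖) + 2 * ε n / (1 - 2 * ε₀) := by
              rw [hrdef]
              exact ratio_alg κ (ε n) (1 - 2*ε₀) (‖x n‖) (‖y n‖) (ne_of_gt h12) (ne_of_gt hxpos)
    constructor
    · have h1 : Tendsto (fun m => y (N + m) / x (N + m)) atTop (nhds 0) := by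
        rw [tendsto_zero_iff_norm_tendsto_zero]
        simpa [norm_div] using hq
      rw [show (fun m => y (N + m) / x (N + m)) = (fun m => y (m + N) / x (m + N)) from
        funext fun m => by rw [Nat.add_comm]] at h1
      exact (tendsto_add_atTop_iff_nat N).mp h1
    · rw [eventually_atTop]
      refine ⟨N, fun n hn => ?_⟩
      obtain ⟨m, rfl⟩ := Nat.exists_eq_add_of_le hn
      exact norm_pos_iff.mp (inv m).2
  · -- y dominates
    right
    push_neg at hcase
    have hxy : ∀ n ≥ N0, ‖x n‖ < ‖y n‖ := hcase
    have hypos : ∀ n ≥ N0, 0 < ‖y n‖ := fun n hn =>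
      lt_of_le_of_lt (norm_nonneg _) (hxy n hn)
    obtain ⟨θ, hθdef⟩ : ∃ t : ℝ, t = (1 + κ) / 2 := ⟨_, rfl⟩
    have hθ1 : θ < 1 := by rw [hθdef]; linarith
    have hθpos : 0 < θ := by rw [hθdef]; linarith
    have hyub' : ∀ n ≥ N0, ‖y (n + 1)‖ ≤ θ * ‖y n‖ := by
      intro n hn
      have h1 := hyub n
      have hen : ‖e n‖ ≤ 2 * ε₀ * ‖y n‖ := by
        have h2 := he n
        have h3 := hεle n hn
        have h4 := (hxy n hn).le
        have := hεpos n
        nlinarith [norm_nonneg (x n), norm_nonneg (y n)]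
      have : κ + 2 * ε₀ = θ := by rw [hθdef, hε₀def]; ring
      nlinarith [norm_nonneg (y n)]
    -- main claim
    have main : ∀ η : ℝ, 0 < η → η ≤ 1 → ∃ N1, N0 ≤ N1 ∧ ∀ n ≥ N1, ‖x n‖ < η * ‖y n‖ := by
      intro η hη hη1
      have hε''pos : (0:ℝ) < η * (1 - θ) / 4 := by nlinarith
      obtain ⟨N1', hN1'⟩ := (Metric.tendsto_atTop.mp hε) (η * (1 - θ) / 4) hε''pos
      obtain ⟨ε', hε'def⟩ : ∃ t : ℝ, t = η * (1 - θ) / 4 := ⟨_, rfl⟩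
      rw [← hε'def] at hN1'
      obtain ⟨N1, hN1N0, hεle'⟩ : ∃ N1, N0 ≤ N1 ∧ ∀ m ≥ N1, ε m ≤ ε' := by
        refine ⟨max N1' N0, le_max_right _ _, fun m hm => ?_⟩
        have := hN1' m (le_trans (le_max_left _ _) hm)
        rw [Real.dist_eq, sub_zero] at this
        exact (le_abs_self _).trans this.le
      refine ⟨N1, hN1N0, fun n hn => ?_⟩
      by_contra hcon
      push_neg at hcon
      obtain ⟨ρ, hρdef⟩ : ∃ t : ℝ, t = (1 + θ) / (2 * θ) := ⟨_, rfl⟩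
      have hρ1 : 1 < ρ := by
        rw [hρdef, lt_div_iff₀ (by linarith)]; linarith
      have grow : ∀ m, η * ρ ^ m * ‖y (n + m)‖ ≤ ‖x (n + m)‖ := by
        intro m
        induction m with
        | zero => simpa using hcon
        | succ m ih =>
          obtain ⟨p, hp⟩ : ∃ p, p = n + m := ⟨_, rfl⟩
          rw [← hp] at ih
          have hpN1 : N1 ≤ p := by omega
          have hpN0 : N0 ≤ p := le_trans hN1N0 hpN1
          have hρm1 : 1 ≤ ρ ^ m := one_le_pow₀ hρ1.le
          have hyp := hypos p hpN0
          have hen : ‖e p‖ ≤ 2 * ε' * ‖y p‖ := by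
            have h2 := he p
            have h3 := hεle' p hpN1
            have h4 := (hxy p hpN0).le
            have := hεpos p
            nlinarith [norm_nonneg (x p), norm_nonneg (y p)]
          have hx1 : ‖x p‖ - 2 * ε' * ‖y p‖ ≤ ‖x (p + 1)‖ := by
            have := hxlb p; linarith
          have hy1 := hyub' p hpN0
          have heq : n + (m + 1) = p + 1 := by omega
          rw [heq]
          have hθ0' : (0:ℝ) ≤ 1 - θ := by linarith
          have key : η * ρ ^ (m + 1) * (θ * ‖y p‖) ≤ ‖x p‖ - 2 * ε' * ‖y p‖ := by
            have hρθ : ρ * θ = (1 + θ) / 2 := by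
              rw [hρdef]; field_simp
            have h5 : η * ρ ^ (m+1) * (θ * ‖y p‖) = η * ρ ^ m * ((1 + θ)/2) * ‖y p‖ := by
              rw [pow_succ]
              linear_combination (η * ρ ^ m * ‖y p‖) * hρθ
            rw [h5, hε'def]
            have haux : (0:ℝ) ≤ (ρ ^ m - 1) * (η * (1 - θ) * ‖y p‖) :=
              mul_nonneg (by linarith) (mul_nonneg (mul_nonneg hη.le hθ0') hyp.le)
            nlinarith [ih, haux]
          have hρ0 : (0:ℝ) ≤ ρ := by linarith
          have hfin : η * ρ ^ (m + 1) * ‖y (p + 1)‖ ≤ η * ρ ^ (m + 1) * (θ * ‖y p‖) :=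
            mul_le_mul_of_nonneg_left hy1
              (mul_nonneg hη.le (pow_nonneg hρ0 _))
          linarith
      obtain ⟨m, hm⟩ := pow_unbounded_of_one_lt (1 / η) hρ1
      have hpN0 : N0 ≤ n + m := by omega
      have h1 := grow m
      have h2 := hxy (n + m) hpN0
      have h3 := hypos (n + m) hpN0
      have h4 : 1 < η * ρ ^ m := by
        rw [div_lt_iff₀ hη] at hm; linarith
      nlinarith
    constructor
    · rw [Metric.tendsto_atTop]
      intro δ hδ
      obtain ⟨N1, hN10, hN1⟩ := main (min δ 1) (lt_min hδ one_pos) (min_le_right _ _)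
      refine ⟨N1, fun n hn => ?_⟩
      have h1 := hN1 n hn
      have h2 := hypos n (le_trans hN10 hn)
      rw [dist_zero_right]
      have h3 : ‖x n / y n‖ < min δ 1 := by
        rw [norm_div, div_lt_iff₀ h2]
        linarith
      exact h3.trans_le (min_le_left _ _)
    · rw [eventually_atTop]
      exact ⟨N0, fun n hn => norm_pos_iff.mp (hypos n hn)⟩

lemma tendsto_inv_nat_complex :
    Tendsto (fun n : ℕ => ((n : ℂ))⁻¹) atTop (nhds 0) := by
  have h1 : Tendsto (fun n : ℕ => ((n : ℝ))⁻¹) atTop (nhds 0) :=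
    tendsto_inv_atTop_zero.comp tendsto_natCast_atTop_atTop
  have h2 := (Complex.continuous_ofReal.tendsto 0).comp h1
  simpa [Function.comp_def, Complex.ofReal_inv] using h2

lemma den_ne_zero (k : ℕ) (hk : 2 ≤ k) (n : ℕ) :
    2 * (k : ℂ) * (((n:ℤ) : ℂ) + 2) * (2 * ((n:ℤ) : ℂ) + (k : ℂ) + 8) ≠ 0 := by
  push_cast
  have hk0 : (k : ℂ) ≠ 0 := Nat.cast_ne_zero.mpr (by omega)
  have h1 : ((n : ℂ) + 2) ≠ 0 := by
    have h : ((n + 2 : ℕ) : ℂ) ≠ 0 := Nat.cast_ne_zero.mpr (by omega)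
    intro hc; apply h; push_cast; linear_combination hc
  have h2 : (2 * (n : ℂ) + (k : ℂ) + 8) ≠ 0 := by
    have h : ((2 * n + k + 8 : ℕ) : ℂ) ≠ 0 := Nat.cast_ne_zero.mpr (by omega)
    intro hc; apply h; push_cast; linear_combination hc
  exact mul_ne_zero (mul_ne_zero (mul_ne_zero two_ne_zero hk0) h1) h2

lemma tendsto_Acoef (k : ℕ) (hk : 2 ≤ k) (lam : ℂ) :
    Tendsto (fun n : ℕ => Acoef k lam n) atTop (nhds (1 - 1 / (k : ℂ))) := by
  have hk0 : (k : ℂ) ≠ 0 := Nat.cast_ne_zero.mpr (by omega)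
  set F : ℂ → ℂ := fun z => (k : ℂ) * lam ^ 2 * z ^ 2 + (k : ℂ) * (4 * z + 9 * z ^ 2) * lam
      + 4 * (k : ℂ) + 16 * (k : ℂ) * z - 4 + 14 * (k : ℂ) * z ^ 2 - 16 * z - 16 * z ^ 2
    with hF
  set G : ℂ → ℂ := fun z => 2 * (k : ℂ) * (1 + 2 * z) * (2 + ((k : ℂ) + 8) * z) with hG
  have hFc : Continuous F := by rw [hF]; continuity
  have hGc : Continuous G := by rw [hG]; continuity
  have hF0 : F 0 = 4 * (k : ℂ) - 4 := by rw [hF]; ring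
  have hG0 : G 0 = 4 * (k : ℂ) := by rw [hG]; ring
  have hG0ne : G 0 ≠ 0 := by rw [hG0]; exact mul_ne_zero (by norm_num) hk0
  have hdiv : Tendsto (fun n : ℕ => F ((n:ℂ)⁻¹) / G ((n:ℂ)⁻¹)) atTop
      (nhds (F 0 / G 0)) :=
    ((hFc.tendsto 0).comp tendsto_inv_nat_complex).div
      ((hGc.tendsto 0).comp tendsto_inv_nat_complex) hG0ne
  have hlim : F 0 / G 0 = 1 - 1 / (k : ℂ) := by
    rw [hF0, hG0]; field_simp
  rw [hlim] at hdiv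
  apply hdiv.congr'
  rw [EventuallyEq, eventually_atTop]
  refine ⟨1, fun n hn => ?_⟩
  have hn0 : (n : ℂ) ≠ 0 := Nat.cast_ne_zero.mpr (by omega)
  have hD := den_ne_zero k hk n
  have hGeq : G ((n:ℂ)⁻¹) = (2 * (k : ℂ) * ((n : ℂ) + 2) * (2 * (n : ℂ) + (k : ℂ) + 8))
      / (n : ℂ) ^ 2 := by
    rw [hG]; field_simp; ring
  have hGne : G ((n:ℂ)⁻¹) ≠ 0 := by
    rw [hGeq]
    apply div_ne_zero _ (pow_ne_zero _ hn0)
    push_cast at hD ⊢; exact hD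
  have hFeq : F ((n:ℂ)⁻¹) = ((k : ℂ) * lam ^ 2 + (k : ℂ) * (4 * (n:ℂ) + 9) * lam
      + 4 * (k : ℂ) * (n:ℂ) ^ 2 + 16 * (n:ℂ) * (k : ℂ) - 4 * (n:ℂ) ^ 2 + 14 * (k : ℂ)
      - 16 * (n:ℂ) - 16) / (n : ℂ) ^ 2 := by
    simp only [hF]
    rw [eq_div_iff (pow_ne_zero 2 hn0)]
    have h1 : (n:ℂ)⁻¹ * (n:ℂ) = 1 := inv_mul_cancel₀ hn0
    linear_combination ((k:ℂ) * lam ^ 2 + 9 * (k:ℂ) * lam + 14 * (k:ℂ) - 16)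
        * ((n:ℂ)⁻¹ * (n:ℂ) + 1) * h1
      + (4 * (k:ℂ) * lam + 16 * (k:ℂ) - 16) * (n:ℂ) * h1
  rw [Acoef, hFeq, hGeq, div_div_div_cancel_right₀ (pow_ne_zero 2 hn0)]
  push_cast
  ring

lemma tendsto_Bcoef (k : ℕ) (hk : 2 ≤ k) (lam : ℂ) :
    Tendsto (fun n : ℕ => Bcoef k lam n) atTop (nhds (1 / (k : ℂ))) := by
  have hk0 : (k : ℂ) ≠ 0 := Nat.cast_ne_zero.mpr (by omega)
  set F : ℂ → ℂ := fun z => (z * lam + 2 + 3 * z) * (z * lam + 2 + 2 * z) with hF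
  set G : ℂ → ℂ := fun z => 2 * (k : ℂ) * (1 + 2 * z) * (2 + ((k : ℂ) + 8) * z) with hG
  have hFc : Continuous F := by rw [hF]; continuity
  have hGc : Continuous G := by rw [hG]; continuity
  have hF0 : F 0 = 4 := by rw [hF]; ring
  have hG0 : G 0 = 4 * (k : ℂ) := by rw [hG]; ring
  have hG0ne : G 0 ≠ 0 := by rw [hG0]; exact mul_ne_zero (by norm_num) hk0
  have hdiv : Tendsto (fun n : ℕ => F ((n:ℂ)⁻¹) / G ((n:ℂ)⁻¹)) atTop
      (nhds (F 0 / G 0)) :=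
    ((hFc.tendsto 0).comp tendsto_inv_nat_complex).div
      ((hGc.tendsto 0).comp tendsto_inv_nat_complex) hG0ne
  have hlim : F 0 / G 0 = 1 / (k : ℂ) := by
    rw [hF0, hG0]; rw [div_eq_div_iff (by rw [← hG0]; exact hG0ne) hk0]; ring
  rw [hlim] at hdiv
  apply hdiv.congr'
  rw [EventuallyEq, eventually_atTop]
  refine ⟨1, fun n hn => ?_⟩
  have hn0 : (n : ℂ) ≠ 0 := Nat.cast_ne_zero.mpr (by omega)
  have hD := den_ne_zero k hk n
  have hGeq : G ((n:ℂ)⁻¹) = (2 * (k : ℂ) * ((n : ℂ) + 2) * (2 * (n : ℂ) + (k : ℂ) + 8))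
      / (n : ℂ) ^ 2 := by
    rw [hG]; field_simp; ring
  have hFeq : F ((n:ℂ)⁻¹) = ((lam + 2 * (n:ℂ) + 3) * (lam + 2 * (n:ℂ) + 2)) / (n : ℂ) ^ 2 := by
    simp only [hF]
    rw [eq_div_iff (pow_ne_zero 2 hn0)]
    have h1 : (n:ℂ)⁻¹ * (n:ℂ) = 1 := inv_mul_cancel₀ hn0
    linear_combination ((lam + 3) * (lam + 2)) * ((n:ℂ)⁻¹ * (n:ℂ) + 1) * h1
      + 2 * ((lam + 3) + (lam + 2)) * (n:ℂ) * h1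
  rw [Bcoef, hFeq, hGeq, div_div_div_cancel_right₀ (pow_ne_zero 2 hn0)]
  push_cast
  ring

/-- Poincaré dichotomy: the terms `aₙ` are eventually nonzero and the ratios
`aₙ₊₁/aₙ` converge either to `1` or to `-1/k`. -/
theorem ratio_dichotomy (k : ℕ) (hk : 2 ≤ k) (lam : ℂ) (hre : 0 ≤ lam.re) (a : ℕ → ℂ)
    (ha0 : a 0 = 1) (ha1 : a 1 = Acoef k lam (-1))
    (harec : ∀ n : ℕ, a (n + 2) = Acoef k lam n * a (n + 1) + Bcoef k lam n * a n) :
    (∃ N : ℕ, ∀ n ≥ N, a n ≠ 0) ∧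
      (Filter.Tendsto (fun n => a (n + 1) / a n) Filter.atTop (nhds 1) ∨
        Filter.Tendsto (fun n => a (n + 1) / a n) Filter.atTop (nhds (-1 / (k : ℂ)))) := by
  have hk0R : (0:ℝ) < (k : ℝ) := by positivity
  have hk2R : (2:ℝ) ≤ (k : ℝ) := by exact_mod_cast hk
  have hk0 : (k : ℂ) ≠ 0 := Nat.cast_ne_zero.mpr (by omega)
  -- the characteristic roots are 1 and t2 = -1/k
  set t2 : ℂ := -(1 / (k : ℂ)) with ht2def
  have hnormk : ‖(k:ℂ)‖ = (k:ℝ) := by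
    rw [Complex.norm_natCast]
  have ht2 : ‖t2‖ = 1 / (k:ℝ) := by
    rw [ht2def, norm_neg, norm_div, hnormk, norm_one]
  -- auxiliary sequences
  set x : ℕ → ℂ := fun n => a (n + 1) + (1 / (k:ℂ)) * a n with hxdef
  set y : ℕ → ℂ := fun n => a (n + 1) - a n with hydef
  set al : ℕ → ℂ := fun n => Acoef k lam n - (1 - 1 / (k:ℂ)) with haldef
  set be : ℕ → ℂ := fun n => Bcoef k lam n - 1 / (k:ℂ) with hbedef
  set e : ℕ → ℂ := fun n => al n * a (n + 1) + be n * a n with hedef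
  set ε : ℕ → ℝ := fun n => ‖al n‖ + ‖be n‖ with hεdef
  have hc : (1 : ℂ) + 1 / (k:ℂ) ≠ 0 := by
    intro h
    have h2 : ((1 + 1 / (k:ℝ) : ℝ) : ℂ) = 0 := by push_cast; linear_combination h
    have h3 : (1 + 1 / (k:ℝ) : ℝ) = 0 := by exact_mod_cast h2
    have : (0:ℝ) < 1 + 1 / (k:ℝ) := by positivity
    linarith
  -- relations
  have hxy_a : ∀ n, x n - y n = (1 + 1 / (k:ℂ)) * a n := by
    intro n; simp only [hxdef, hydef]; ring
  have hxy_a1 : ∀ n, x n + (1 / (k:ℂ)) * y n = (1 + 1 / (k:ℂ)) * a (n + 1) := by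
    intro n; simp only [hxdef, hydef]; ring
  -- not two consecutive zeros
  have hBne : ∀ n : ℕ, Bcoef k lam (n:ℤ) ≠ 0 := by
    intro n
    have hf1 : lam + 2 * (((n:ℤ)):ℂ) + 3 ≠ 0 := by
      intro h
      have h2 := congrArg Complex.re h
      have h3 : (2 * (((n:ℤ)):ℂ) + 3) = (((2 * n + 3 : ℕ)):ℂ) := by push_cast; ring
      rw [show lam + 2 * (((n:ℤ)):ℂ) + 3 = lam + (2 * (((n:ℤ)):ℂ) + 3) from by ring, h3] at h2
      simp [Complex.add_re, Complex.natCast_re] at h2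
      have hn0' : (0:ℝ) ≤ (n:ℝ) := Nat.cast_nonneg n
      linarith
    have hf2 : lam + 2 * (((n:ℤ)):ℂ) + 2 ≠ 0 := by
      intro h
      have h2 := congrArg Complex.re h
      have h3 : (2 * (((n:ℤ)):ℂ) + 2) = (((2 * n + 2 : ℕ)):ℂ) := by push_cast; ring
      rw [show lam + 2 * (((n:ℤ)):ℂ) + 2 = lam + (2 * (((n:ℤ)):ℂ) + 2) from by ring, h3] at h2
      simp [Complex.add_re, Complex.natCast_re] at h2
      have hn0' : (0:ℝ) ≤ (n:ℝ) := Nat.cast_nonneg n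
      linarith
    exact div_ne_zero (mul_ne_zero hf1 hf2) (den_ne_zero k hk n)
  have hpair : ∀ n : ℕ, ¬(a n = 0 ∧ a (n + 1) = 0) := by
    intro n
    induction n with
    | zero => intro ⟨h, _⟩; rw [ha0] at h; exact one_ne_zero h
    | succ m ih =>
      rintro ⟨h1, h2⟩
      have h3 := harec m
      rw [h1, h2] at h3
      simp at h3
      rcases h3 with h3 | h3
      · exact hBne m h3
      · exact ih ⟨h3, h1⟩
  have hM : ∀ n, x n ≠ 0 ∨ y n ≠ 0 := by
    intro n
    by_contra h
    push_neg at h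
    obtain ⟨hx0, hy0⟩ := h
    have h1 : (1 + 1 / (k:ℂ)) * a n = 0 := by rw [← hxy_a n, hx0, hy0]; ring
    have h2 : a n = 0 := by
      rcases mul_eq_zero.mp h1 with h | h
      · exact absurd h hc
      · exact h
    have h3 : a (n + 1) = 0 := by
      have := hy0
      simp only [hydef] at this
      rw [h2] at this
      simpa using this
    exact hpair n ⟨h2, h3⟩
  -- recurrences for x and y
  have hxrec : ∀ n, x (n + 1) = x n + e n := by
    intro n
    simp only [hxdef, hedef, haldef, hbedef]
    rw [show n + 1 + 1 = n + 2 from rfl, harec n]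
    ring
  have hyrec : ∀ n, y (n + 1) = t2 * y n + e n := by
    intro n
    simp only [hydef, hedef, haldef, hbedef, ht2def]
    rw [show n + 1 + 1 = n + 2 from rfl, harec n]
    ring
  -- error bound
  have hnormc : (1:ℝ) ≤ ‖(1:ℂ) + 1 / (k:ℂ)‖ := by
    have h1 : ((1:ℂ) + 1 / (k:ℂ)) = (((1 + 1 / (k:ℝ) : ℝ)):ℂ) := by push_cast; ring
    rw [h1, Complex.norm_real, Real.norm_eq_abs, abs_of_pos (by positivity)]
    have : 0 < 1 / (k:ℝ) := by positivity
    linarith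
  have hanorm : ∀ n, ‖a n‖ ≤ ‖x n‖ + ‖y n‖ := by
    intro n
    have h1 : ‖(1 + 1 / (k:ℂ)) * a n‖ = ‖(1:ℂ) + 1/(k:ℂ)‖ * ‖a n‖ := norm_mul _ _
    have h2 : ‖x n - y n‖ ≤ ‖x n‖ + ‖y n‖ := norm_sub_le _ _
    rw [← hxy_a n] at h1
    nlinarith [norm_nonneg (a n), norm_nonneg (x n - y n)]
  have ha1norm : ∀ n, ‖a (n + 1)‖ ≤ ‖x n‖ + ‖y n‖ := by
    intro n
    have h1 : ‖(1 + 1 / (k:ℂ)) * a (n+1)‖ = ‖(1:ℂ) + 1/(k:ℂ)‖ * ‖a (n+1)‖ := norm_mul _ _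
    rw [← hxy_a1 n] at h1
    have h2 : ‖x n + (1 / (k:ℂ)) * y n‖ ≤ ‖x n‖ + ‖(1 / (k:ℂ))‖ * ‖y n‖ := by
      calc ‖x n + (1 / (k:ℂ)) * y n‖ ≤ ‖x n‖ + ‖(1 / (k:ℂ)) * y n‖ := norm_add_le _ _
      _ = ‖x n‖ + ‖(1 / (k:ℂ))‖ * ‖y n‖ := by rw [norm_mul]
    have h3 : ‖(1 / (k:ℂ))‖ ≤ 1 := by
      rw [norm_div, norm_one, hnormk]
      rw [div_le_one hk0R]; linarith
    nlinarith [norm_nonneg (a (n+1)), norm_nonneg (y n)]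
  have he : ∀ n, ‖e n‖ ≤ ε n * (‖x n‖ + ‖y n‖) := by
    intro n
    simp only [hedef, hεdef]
    calc ‖al n * a (n + 1) + be n * a n‖ ≤ ‖al n * a (n + 1)‖ + ‖be n * a n‖ := norm_add_le _ _
    _ = ‖al n‖ * ‖a (n + 1)‖ + ‖be n‖ * ‖a n‖ := by rw [norm_mul, norm_mul]
    _ ≤ (‖al n‖ + ‖be n‖) * (‖x n‖ + ‖y n‖) := by
        nlinarith [hanorm n, ha1norm n, norm_nonneg (al n), norm_nonneg (be n),
          norm_nonneg (a n), norm_nonneg (a (n+1))]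
  -- ε tends to zero
  have hal0 : Tendsto al atTop (nhds 0) := by
    have := (tendsto_Acoef k hk lam).sub_const (1 - 1 / (k:ℂ))
    simpa [haldef, sub_self] using this
  have hbe0 : Tendsto be atTop (nhds 0) := by
    have := (tendsto_Bcoef k hk lam).sub_const (1 / (k:ℂ))
    simpa [hbedef, sub_self] using this
  have hε0 : Tendsto ε atTop (nhds 0) := by
    have h1 : Tendsto (fun n => ‖al n‖) atTop (nhds 0) :=
      tendsto_zero_iff_norm_tendsto_zero.mp hal0
    have h2 : Tendsto (fun n => ‖be n‖) atTop (nhds 0) :=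
      tendsto_zero_iff_norm_tendsto_zero.mp hbe0
    simpa [hεdef] using h1.add h2
  have hεpos : ∀ n, 0 ≤ ε n := fun n => by
    simp only [hεdef]; positivity
  -- parameters for Perron
  have hκ0 : (0:ℝ) < 1 / (k:ℝ) := by positivity
  have hκ1 : 1 / (k:ℝ) < 1 := by rw [div_lt_one hk0R]; linarith
  have H := perron (1 / (k:ℝ)) hκ0 hκ1 t2 ht2 x y e ε hεpos hxrec hyrec he hε0 hM
  rcases H with ⟨hu, hxne⟩ | ⟨hv, hyne⟩
  · -- ratio → 1
    have hsmall : ∀ᶠ n in atTop, ‖y n / x n‖ < 1 := by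
      have := hu.eventually (Metric.ball_mem_nhds (0:ℂ) one_pos)
      filter_upwards [this] with n hn
      simpa [Metric.mem_ball, dist_zero_right] using hn
    have hgood : ∀ᶠ n in atTop, x n ≠ 0 ∧ x n - y n ≠ 0 ∧ a n ≠ 0 := by
      filter_upwards [hxne, hsmall] with n hxn hyn
      have hsub : x n - y n ≠ 0 := by
        intro h
        have h2 : y n = x n := by linear_combination -h
        rw [h2] at hyn
        rw [div_self hxn] at hyn
        simp at hyn
      refine ⟨hxn, hsub, ?_⟩
      intro h
      exact hsub (by rw [hxy_a n, h, mul_zero])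
    constructor
    · rw [eventually_atTop] at hgood
      obtain ⟨N, hN⟩ := hgood
      exact ⟨N, fun n hn => (hN n hn).2.2⟩
    · left
      have hlim : Tendsto (fun n => (1 + (1/(k:ℂ)) * (y n / x n)) / (1 - y n / x n)) atTop
          (nhds 1) := by
        have hnum : Tendsto (fun n => 1 + (1/(k:ℂ)) * (y n / x n)) atTop (nhds 1) := by
          have := (hu.const_mul (1/(k:ℂ))).const_add (1:ℂ)
          simpa using this
        have hden : Tendsto (fun n => 1 - y n / x n) atTop (nhds 1) := by
          have := hu.const_sub (1:ℂ)
          simpa using this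
        have := hnum.div hden one_ne_zero
        rw [div_one] at this; exact this
      apply hlim.congr'
      filter_upwards [hgood] with n ⟨hxn, hsub, han⟩
      have key : a (n + 1) / a n = (x n + (1/(k:ℂ)) * y n) / (x n - y n) := by
        rw [← mul_div_mul_left (a (n+1)) (a n) hc, ← hxy_a1 n, ← hxy_a n]
      rw [key]
      field_simp
  · -- ratio → -1/k
    have hsmall : ∀ᶠ n in atTop, ‖x n / y n‖ < 1 := by
      have := hv.eventually (Metric.ball_mem_nhds (0:ℂ) one_pos)
      filter_upwards [this] with n hn
      simpa [Metric.mem_ball, dist_zero_right] using hn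
    have hgood : ∀ᶠ n in atTop, y n ≠ 0 ∧ x n - y n ≠ 0 ∧ a n ≠ 0 := by
      filter_upwards [hyne, hsmall] with n hyn hxn
      have hsub : x n - y n ≠ 0 := by
        intro h
        have h2 : x n = y n := by linear_combination h
        rw [h2] at hxn
        rw [div_self hyn] at hxn
        simp at hxn
      refine ⟨hyn, hsub, ?_⟩
      intro h
      exact hsub (by rw [hxy_a n, h, mul_zero])
    constructor
    · rw [eventually_atTop] at hgood
      obtain ⟨N, hN⟩ := hgood
      exact ⟨N, fun n hn => (hN n hn).2.2⟩
    · right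
      have hlim : Tendsto (fun n => (x n / y n + (1/(k:ℂ))) / (x n / y n - 1)) atTop
          (nhds (-1 / (k:ℂ))) := by
        have hnum : Tendsto (fun n => x n / y n + (1/(k:ℂ))) atTop (nhds (1/(k:ℂ))) := by
          have := hv.add_const (1/(k:ℂ))
          simpa using this
        have hden : Tendsto (fun n => x n / y n - 1) atTop (nhds (-1)) := by
          have := hv.sub_const (1:ℂ)
          simpa using this
        have := hnum.div hden (by norm_num : (-1:ℂ) ≠ 0)
        have heq : (1/(k:ℂ)) / (-1:ℂ) = -1 / (k:ℂ) := by ring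
        rwa [heq] at this
      apply hlim.congr'
      filter_upwards [hgood] with n ⟨hyn, hsub, han⟩
      have key : a (n + 1) / a n = (x n + (1/(k:ℂ)) * y n) / (x n - y n) := by
        rw [← mul_div_mul_left (a (n+1)) (a n) hc, ← hxy_a1 n, ← hxy_a n]
      rw [key]
      field_simp
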